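/- The two-stage problem equals its logic-based Benders master reformulation: inf { ∑_{p=1}^{P} f_pᵀ x_p + ∑_{p=1}^{P} γ^{p−1} Q_p(x_p) : x ∈ 𝒳 } = inf { ∑_{p=1}^{P} f_pᵀ x_p + ∑_{p=1}^{P} γ^{p−1} Θ_p : x ∈ 𝒳, Θ ∈ ℝ^P with Θ_p ≥ 0 for all p, and for every p ∈ {1,…,P}: Θ_p ≥ Q_p(x'_p)·1[x_p ≤ x'_p] for all x'_p ∈ S(Q_p), and ¬(x_p ≤ x'_p) for all x'_p ∈ 𝒳_p ∖ S(Q_p) }, where both infima are taken in the extended reals and 1[C] is 1 if the clause C holds and 0 otherwise. -/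

import Mathlib

open Finset
open scoped ENNReal Classical

/-- Objective value, in the extended reals, of a strategic solution `x` with
period-`p` second-stage values `G p` (in `[0,+∞]`): `∑_p f_pᵀ x_p + ∑_p γ^{p−1} G_p`.
Periods `p ∈ {1,…,P}` are indexed by `Fin P`, so `γ^{p−1}` is `γ ^ p.val`. -/
noncomputable def twoStageObj {n P : ℕ} (γ : ℝ) (f : Fin P → Fin n → ℝ)
    (x : Fin P → Fin n → ℤ) (G : Fin P → ℝ≥0∞) : EReal :=
  ((∑ p, ∑ i, f p i * (x p i : ℝ) : ℝ) : EReal) +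
    ((∑ p, ENNReal.ofReal (γ ^ p.val) * G p : ℝ≥0∞) : EReal)

/-- The logic-based Benders master reformulation: the two-stage problem
`inf { ∑_p f_pᵀ x_p + ∑_p γ^{p−1} Q_p(x_p) : x ∈ 𝒳 }` equals the master problem in
which each `Q_p` is replaced by a variable `Θ_p ≥ 0` constrained by all monotone
optimality cuts `Θ_p ≥ Q_p(x'_p)·1[x_p ≤ x'_p]` for `x'_p` in the support `S(Q_p)`,
and by all feasibility cuts `¬(x_p ≤ x'_p)` for `x'_p ∈ 𝒳_p ∖ S(Q_p)`; both infima
are taken in the extended reals. -/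
theorem lbbd_master_reformulation {n P : ℕ} (γ : ℝ) (hγ : 0 < γ)
    (f : Fin P → Fin n → ℝ)
    (𝒳 : Set (Fin P → Fin n → ℤ))
    (Q : Fin P → (Fin n → ℤ) → ℝ≥0∞)
    (hQ : ∀ p : Fin P, ∀ a ∈ (fun x => x p) '' 𝒳, ∀ b ∈ (fun x => x p) '' 𝒳,
      a ≤ b → Q p b ≤ Q p a) :
    sInf {v : EReal | ∃ x ∈ 𝒳,
        v = twoStageObj γ f x (fun p => Q p (x p))} =
      sInf {v : EReal | ∃ x ∈ 𝒳, ∃ Θ : Fin P → ℝ,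
        (∀ p, 0 ≤ Θ p) ∧
        (∀ p : Fin P, ∀ a ∈ (fun x => x p) '' 𝒳, Q p a < ⊤ →
          (if x p ≤ a then Q p a else 0) ≤ ENNReal.ofReal (Θ p)) ∧
        (∀ p : Fin P, ∀ a ∈ (fun x => x p) '' 𝒳, ¬ Q p a < ⊤ → ¬ x p ≤ a) ∧
        v = twoStageObj γ f x (fun p => ENNReal.ofReal (Θ p))} := by

  apply le_antisymm
  · -- LHS ≤ every element of RHS set
    apply le_sInf
    rintro v ⟨x, hx, Θ, hΘ0, hopt, hfeas, rfl⟩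
    have hxp : ∀ p : Fin P, x p ∈ (fun x => x p) '' 𝒳 := fun p => ⟨x, hx, rfl⟩
    have hle : ∀ p : Fin P, Q p (x p) ≤ ENNReal.ofReal (Θ p) := by
      intro p
      by_cases htop : Q p (x p) < ⊤
      · have := hopt p (x p) (hxp p) htop
        simpa using this
      · exact absurd (le_refl (x p)) (hfeas p (x p) (hxp p) htop)
    refine le_trans (sInf_le ⟨x, hx, rfl⟩) ?_
    unfold twoStageObj
    apply add_le_add_right
    rw [EReal.coe_ennreal_le_coe_ennreal_iff]
    exact Finset.sum_le_sum fun p _ => mul_le_mul_right (hle p) _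
  · -- RHS ≤ every element of LHS set
    apply le_sInf
    rintro v ⟨x, hx, rfl⟩
    have hxp : ∀ p : Fin P, x p ∈ (fun x => x p) '' 𝒳 := fun p => ⟨x, hx, rfl⟩
    by_cases htop : ∃ p : Fin P, Q p (x p) = ⊤
    · -- objective is ⊤
      obtain ⟨p0, hp0⟩ := htop
      have hsum : (∑ p, ENNReal.ofReal (γ ^ p.val) * Q p (x p) : ℝ≥0∞) = ⊤ := by
        rw [ENNReal.sum_eq_top]
        refine ⟨p0, Finset.mem_univ _, ?_⟩
        rw [hp0, ENNReal.mul_top]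
        simp [ENNReal.ofReal_eq_zero, not_le, pow_pos hγ]
      have : twoStageObj γ f x (fun p => Q p (x p)) = ⊤ := by
        unfold twoStageObj
        rw [hsum, EReal.coe_ennreal_top, EReal.add_top_of_ne_bot (EReal.coe_ne_bot _)]
      rw [this]
      exact le_top
    · push_neg at htop
      have hfin : ∀ p : Fin P, Q p (x p) < ⊤ := fun p => lt_top_iff_ne_top.2 (htop p)
      apply sInf_le
      refine ⟨x, hx, fun p => (Q p (x p)).toReal, fun p => ENNReal.toReal_nonneg, ?_, ?_, ?_⟩
      · intro p a ha hQa
        split_ifs with hle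
        · rw [ENNReal.ofReal_toReal (htop p)]
          exact hQ p (x p) (hxp p) a ha hle
        · exact zero_le
      · intro p a ha hQa hle
        exact hQa (lt_of_le_of_lt (hQ p (x p) (hxp p) a ha hle) (hfin p))
      · congr 1
        ext p
        rw [ENNReal.ofReal_toReal (htop p)]
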